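/- Let S₁ and S₂ be Borel spaces and let κ be a stochastic kernel on S₁ given S₂. Then for every natural number n ≥ 1 there exists a Borel measurable function φ : S₂ × [0,1]^n → S₁ such that for every Borel set B ⊂ S₁ and every s₂ ∈ S₂, κ(B|s₂) = λⁿ({ω ∈ [0,1]^n : φ(s₂,ω) ∈ B}), where λⁿ is n-dimensional Lebesgue measure on [0,1]^n. -/

import Mathlib

open MeasureTheory ProbabilityTheory Filter Topology Set

namespace AumannAux

variable {S₂ : Type*} [MeasurableSpace S₂]

/-- The cdf of the kernel `κ` at `s₂`. -/
noncomputable def F (κ : Kernel S₂ ℝ) (s₂ : S₂) (x : ℝ) : ℝ := (κ s₂ (Iic x)).toReal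

/-- The quantile (generalized inverse cdf) of the kernel `κ` at `s₂`. -/
noncomputable def quant (κ : Kernel S₂ ℝ) (s₂ : S₂) (u : ℝ) : ℝ :=
  if 0 < u ∧ u < 1 then sInf {x | u ≤ F κ s₂ x} else 0

variable (κ : Kernel S₂ ℝ) [IsMarkovKernel κ] (s₂ : S₂)

lemma F_mono : Monotone (F κ s₂) := fun _ _ hab =>
  ENNReal.toReal_mono (measure_ne_top _ _) (measure_mono (Iic_subset_Iic.mpr hab))

lemma F_nonneg (x : ℝ) : 0 ≤ F κ s₂ x := ENNReal.toReal_nonneg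

lemma F_le_one (x : ℝ) : F κ s₂ x ≤ 1 := by
  simpa [F] using ENNReal.toReal_mono ENNReal.one_ne_top (prob_le_one (μ := κ s₂) (s := Iic x))

lemma F_tendsto_atTop : Tendsto (F κ s₂) atTop (𝓝 1) := by
  have h := tendsto_measure_Iic_atTop (κ s₂)
  rw [measure_univ] at h
  have h2 := (ENNReal.tendsto_toReal ENNReal.one_ne_top).comp h
  exact h2

lemma exists_F_lt {u : ℝ} (hu : 0 < u) : ∃ y, F κ s₂ y < u := by
  have h : Tendsto (fun m : ℕ => κ s₂ (Iic (-(m : ℝ)))) atTop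
      (𝓝 (κ s₂ (⋂ m : ℕ, Iic (-(m : ℝ))))) :=
    tendsto_measure_iInter_atTop (fun _ => measurableSet_Iic.nullMeasurableSet)
      (fun a b hab => Iic_subset_Iic.mpr (by
        have : (a : ℝ) ≤ b := Nat.cast_le.mpr hab
        linarith)) ⟨0, measure_ne_top _ _⟩
  have hempty : (⋂ m : ℕ, Iic (-(m : ℝ))) = ∅ := by
    ext y
    simp only [mem_iInter, mem_Iic, mem_empty_iff_false, iff_false]
    push_neg
    obtain ⟨m, hm⟩ := exists_nat_gt (-y)
    exact ⟨m, by linarith⟩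
  rw [hempty, measure_empty] at h
  have h2 := (ENNReal.tendsto_toReal ENNReal.zero_ne_top).comp h
  simp only [ENNReal.toReal_zero] at h2
  obtain ⟨m, hm⟩ := (h2.eventually_lt_const hu).exists
  exact ⟨-(m : ℝ), hm⟩

lemma setNE {u : ℝ} (hu : u < 1) : {x | u ≤ F κ s₂ x}.Nonempty := by
  obtain ⟨x, hx⟩ := ((F_tendsto_atTop κ s₂).eventually_const_lt hu).exists
  exact ⟨x, hx.le⟩

lemma setBdd {u : ℝ} (hu : 0 < u) : BddBelow {x | u ≤ F κ s₂ x} := by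
  obtain ⟨y, hy⟩ := exists_F_lt κ s₂ hu
  refine ⟨y, fun z hz => ?_⟩
  by_contra hzy
  push_neg at hzy
  exact absurd (le_trans hz (F_mono κ s₂ hzy.le)) (not_le.mpr hy)

lemma F_tendsto_right (x : ℝ) :
    Tendsto (fun m : ℕ => F κ s₂ (x + 1 / ((m : ℝ) + 1))) atTop (𝓝 (F κ s₂ x)) := by
  have h : Tendsto (fun m : ℕ => κ s₂ (Iic (x + 1 / ((m : ℝ) + 1)))) atTop
      (𝓝 (κ s₂ (⋂ m : ℕ, Iic (x + 1 / ((m : ℝ) + 1))))) :=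
    tendsto_measure_iInter_atTop (fun _ => measurableSet_Iic.nullMeasurableSet)
      (fun a b hab => Iic_subset_Iic.mpr (by
        have h1 : (a : ℝ) + 1 ≤ (b : ℝ) + 1 := by
          have : (a : ℝ) ≤ b := Nat.cast_le.mpr hab
          linarith
        have h2 : 1 / ((b : ℝ) + 1) ≤ 1 / ((a : ℝ) + 1) :=
          one_div_le_one_div_of_le (by positivity) h1
        linarith)) ⟨0, measure_ne_top _ _⟩
  have hInter : (⋂ m : ℕ, Iic (x + 1 / ((m : ℝ) + 1))) = Iic x := by
    ext y
    simp only [mem_iInter, mem_Iic]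
    constructor
    · intro h
      by_contra hyx
      push_neg at hyx
      obtain ⟨m, hm⟩ := exists_nat_one_div_lt (sub_pos.mpr hyx)
      exact absurd (h m) (by push_neg; linarith)
    · intro h m
      have : 0 < 1 / ((m : ℝ) + 1) := by positivity
      linarith
  rw [hInter] at h
  exact (ENNReal.tendsto_toReal (measure_ne_top _ _)).comp h

lemma quant_le_iff {u x : ℝ} (h0 : 0 < u) (h1 : u < 1) :
    quant κ s₂ u ≤ x ↔ u ≤ F κ s₂ x := by
  rw [quant, if_pos ⟨h0, h1⟩]
  constructor
  · intro h
    refine ge_of_tendsto (F_tendsto_right κ s₂ x) (Eventually.of_forall fun m => ?_)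
    have hlt : sInf {x | u ≤ F κ s₂ x} < x + 1 / ((m : ℝ) + 1) :=
      lt_of_le_of_lt h (lt_add_of_pos_right x (by positivity))
    obtain ⟨z, hz, hzx⟩ := exists_lt_of_csInf_lt (setNE κ s₂ h1) hlt
    exact hz.trans (F_mono κ s₂ hzx.le)
  · intro h
    exact csInf_le (setBdd κ s₂ h0) h

lemma measurable_quant : Measurable (fun p : S₂ × ℝ => quant κ p.1 p.2) := by
  apply measurable_of_Iic
  intro x
  have hset : (fun p : S₂ × ℝ => quant κ p.1 p.2) ⁻¹' Iic x =
      ({p : S₂ × ℝ | p.2 ≤ F κ p.1 x} ∩ {p : S₂ × ℝ | 0 < p.2 ∧ p.2 < 1}) ∪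
        ({p : S₂ × ℝ | 0 < p.2 ∧ p.2 < 1}ᶜ ∩ {_p : S₂ × ℝ | (0 : ℝ) ≤ x}) := by
    ext p
    by_cases hp : 0 < p.2 ∧ p.2 < 1
    · simp only [mem_preimage, mem_Iic, mem_union, mem_inter_iff, mem_setOf_eq, mem_compl_iff,
        hp, and_true, not_true_eq_false, false_and, or_false]
      exact quant_le_iff κ p.1 hp.1 hp.2
    · rw [mem_preimage, mem_Iic, quant, if_neg hp]
      simp [hp]
  rw [hset]
  have hIoo : MeasurableSet {p : S₂ × ℝ | 0 < p.2 ∧ p.2 < 1} :=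
    measurable_snd (measurableSet_Ioo : MeasurableSet (Ioo (0 : ℝ) 1))
  refine MeasurableSet.union (MeasurableSet.inter ?_ hIoo)
    (MeasurableSet.inter hIoo.compl ?_)
  · exact measurableSet_le measurable_snd
      (((κ.measurable_coe measurableSet_Iic).comp measurable_fst).ennreal_toReal)
  · by_cases h0x : (0 : ℝ) ≤ x <;> simp [h0x]

lemma measurable_quant_right : Measurable (quant κ s₂) :=
  (measurable_quant κ).comp (measurable_const.prodMk measurable_id)

lemma quant_map :
    Measure.map (quant κ s₂) (volume.restrict (Ioo 0 1)) = κ s₂ := by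
  haveI hprob : IsProbabilityMeasure (volume.restrict (Ioo (0 : ℝ) 1)) :=
    ⟨by simp [Real.volume_Ioo]⟩
  haveI : IsProbabilityMeasure (Measure.map (quant κ s₂) (volume.restrict (Ioo (0 : ℝ) 1))) :=
    Measure.isProbabilityMeasure_map (measurable_quant_right κ s₂).aemeasurable
  refine Measure.ext_of_Iic _ _ fun x => ?_
  rw [Measure.map_apply (measurable_quant_right κ s₂) measurableSet_Iic,
    Measure.restrict_apply (measurable_quant_right κ s₂ measurableSet_Iic)]
  have hpre : quant κ s₂ ⁻¹' Iic x ∩ Ioo 0 1 = Iic (F κ s₂ x) ∩ Ioo 0 1 := by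
    ext u
    simp only [mem_inter_iff, mem_preimage, mem_Iic, mem_Ioo, and_congr_left_iff]
    rintro ⟨h0, h1⟩
    exact quant_le_iff κ s₂ h0 h1
  rw [hpre]
  have h1c : F κ s₂ x ≤ 1 := F_le_one κ s₂ x
  have hvol : volume (Iic (F κ s₂ x) ∩ Ioo 0 1) = ENNReal.ofReal (F κ s₂ x) := by
    rcases lt_or_ge (F κ s₂ x) 1 with hc | hc
    · have hIoc : Iic (F κ s₂ x) ∩ Ioo 0 1 = Ioc 0 (F κ s₂ x) := by
        ext u
        simp only [mem_inter_iff, mem_Iic, mem_Ioo, mem_Ioc]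
        constructor
        · rintro ⟨h, h0, _⟩; exact ⟨h0, h⟩
        · rintro ⟨h0u, hu⟩; exact ⟨hu, h0u, lt_of_le_of_lt hu hc⟩
      rw [hIoc, Real.volume_Ioc, sub_zero]
    · have hc1 : F κ s₂ x = 1 := le_antisymm h1c hc
      have hIoo : Iic (F κ s₂ x) ∩ Ioo 0 1 = Ioo 0 1 := by
        rw [hc1]
        ext u
        simp only [mem_inter_iff, mem_Iic, mem_Ioo]
        exact ⟨fun h => h.2, fun h => ⟨h.2.le, h⟩⟩
      rw [hIoo, Real.volume_Ioo, hc1]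
      norm_num
  rw [hvol, F, ENNReal.ofReal_toReal (measure_ne_top _ _)]

end AumannAux

/-- Multidimensional version of Aumann's lemma: for every `n ≥ 1` a stochastic kernel `κ`
on a Borel space `S₁` given a Borel space `S₂` admits a Borel measurable representation
`φ : S₂ × [0,1]ⁿ → S₁` with `κ(B|s₂) = λⁿ({ω ∈ [0,1]ⁿ : φ(s₂,ω) ∈ B})`. -/
theorem aumann_lemma_multidim {S₁ S₂ : Type*}
    [MeasurableSpace S₁] [StandardBorelSpace S₁]
    [MeasurableSpace S₂] [StandardBorelSpace S₂]
    (κ : Kernel S₂ S₁) [IsMarkovKernel κ] :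
    ∀ n : ℕ, 1 ≤ n →
      ∃ φ : S₂ → (Fin n → ℝ) → S₁,
        Measurable (fun p : S₂ × (Fin n → ℝ) => φ p.1 p.2) ∧
        ∀ (B : Set S₁), MeasurableSet B → ∀ s₂ : S₂,
          κ s₂ B = volume {ω : Fin n → ℝ | (∀ i, ω i ∈ Set.Icc (0 : ℝ) 1) ∧ φ s₂ ω ∈ B} := by
  intro n hn
  rcases isEmpty_or_nonempty S₂ with hS₂ | hS₂
  · exact ⟨fun s₂ => isEmptyElim s₂, measurable_of_empty _, fun B _ s₂ => isEmptyElim s₂⟩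
  have hne : Nonempty S₁ := by
    by_contra h
    rw [not_nonempty_iff] at h
    obtain ⟨s₂⟩ := hS₂
    have h1 : κ s₂ univ = 1 := measure_univ
    rw [Set.univ_eq_empty_iff.mpr h, measure_empty] at h1
    exact zero_ne_one h1
  set e := MeasureTheory.embeddingReal S₁ with he_def
  have he := MeasureTheory.measurableEmbedding_embeddingReal S₁
  obtain ⟨r, hr, hre⟩ := he.exists_measurable_extend measurable_id fun _ => hne
  set κ' := κ.map e with hκ'_def
  haveI : IsMarkovKernel κ' := Kernel.IsMarkovKernel.map κ he.measurable
  set i0 : Fin n := ⟨0, hn⟩ with hi0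
  set g := AumannAux.quant κ' with hg
  refine ⟨fun s₂ ω => r (g s₂ (ω i0)), ?_, ?_⟩
  · exact hr.comp ((AumannAux.measurable_quant κ').comp
      (measurable_fst.prodMk ((measurable_pi_apply i0).comp measurable_snd)))
  · intro B hB s₂
    have hgm : Measurable (g s₂) := AumannAux.measurable_quant_right κ' s₂
    set C : Set ℝ := g s₂ ⁻¹' (r ⁻¹' B) with hC
    have hCm : MeasurableSet C := hgm (hr hB)
    have hset : {ω : Fin n → ℝ | (∀ i, ω i ∈ Icc (0 : ℝ) 1) ∧ r (g s₂ (ω i0)) ∈ B}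
        = Set.pi univ fun i => if i = i0 then Icc (0 : ℝ) 1 ∩ C else Icc (0 : ℝ) 1 := by
      ext ω
      simp only [mem_setOf_eq, Set.mem_univ_pi]
      constructor
      · rintro ⟨h1, h2⟩ i
        by_cases h : i = i0
        · rw [if_pos h, h]; exact ⟨h1 i0, h2⟩
        · rw [if_neg h]; exact h1 i
      · intro h
        refine ⟨fun i => ?_, ?_⟩
        · have hi := h i
          by_cases hii : i = i0
          · rw [if_pos hii] at hi; exact hi.1
          · rwa [if_neg hii] at hi
        · have hi := h i0
          rw [if_pos rfl] at hi
          exact hi.2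
    rw [hset, volume_pi_pi]
    have hprod : (∏ i, volume (if i = i0 then Icc (0 : ℝ) 1 ∩ C else Icc (0 : ℝ) 1))
        = volume (Icc (0 : ℝ) 1 ∩ C) := by
      rw [Finset.prod_eq_single i0 (fun i _ hi => by simp [if_neg hi, Real.volume_Icc])
        (fun h => absurd (Finset.mem_univ i0) h)]
      rw [if_pos rfl]
    rw [hprod]
    have h1 : volume (Icc (0 : ℝ) 1 ∩ C) = volume (Ioo (0 : ℝ) 1 ∩ C) := by
      apply le_antisymm
      · calc volume (Icc (0 : ℝ) 1 ∩ C) ≤ volume (Ioo (0 : ℝ) 1 ∩ C ∪ {0, 1}) := by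
              apply measure_mono
              rintro u ⟨⟨h0, h1⟩, hc⟩
              rcases eq_or_lt_of_le h0 with h | h
              · exact Or.inr (Or.inl h.symm)
              rcases eq_or_lt_of_le h1 with h' | h'
              · exact Or.inr (Or.inr h')
              · exact Or.inl ⟨⟨h, h'⟩, hc⟩
          _ ≤ volume (Ioo (0 : ℝ) 1 ∩ C) + volume ({0, 1} : Set ℝ) := measure_union_le _ _
          _ = volume (Ioo (0 : ℝ) 1 ∩ C) := by
              rw [(Set.to_countable ({0, 1} : Set ℝ)).measure_zero, add_zero]
      · exact measure_mono (inter_subset_inter_left _ Ioo_subset_Icc_self)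
    have h2 : volume (Ioo (0 : ℝ) 1 ∩ C) = (volume.restrict (Ioo (0 : ℝ) 1)) C := by
      rw [Measure.restrict_apply hCm, inter_comm]
    have h3 : (volume.restrict (Ioo (0 : ℝ) 1)) C
        = Measure.map (g s₂) (volume.restrict (Ioo (0 : ℝ) 1)) (r ⁻¹' B) := by
      rw [Measure.map_apply hgm (hr hB)]
    have h4 : Measure.map (g s₂) (volume.restrict (Ioo (0 : ℝ) 1)) (r ⁻¹' B)
        = κ' s₂ (r ⁻¹' B) := by
      rw [hg, AumannAux.quant_map]
    have h5 : κ' s₂ (r ⁻¹' B) = κ s₂ (e ⁻¹' (r ⁻¹' B)) :=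
      Kernel.map_apply' κ he.measurable s₂ (hr hB)
    have h6 : e ⁻¹' (r ⁻¹' B) = B := by
      ext a
      have : r (e a) = a := congrFun hre a
      simp [mem_preimage, this]
    rw [h1, h2, h3, h4, h5, h6]
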